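/- Let x ∈ (0,1), ι ≥ 0 an integer, and a_1,...,a_q, b_1,...,b_q integers with Σ_i a_i = Σ_i b_i and Σ_i |a_i - b_i| ≤ 2ι. Then Σ_i min( x^{-a_i}/Σ_j x^{-a_j}, x^{-b_i}/Σ_j x^{-b_j} ) ≥ 1 - (1 - x^ι)/(1 + x^ι). -/

import Mathlib

open Finset

noncomputable section

attribute [local instance] Classical.propDecidable

/-- A finite multigraph with a fixed orientation: each edge has a source and a target. -/
structure Multigraph (V E : Type) where
  src : E → V
  tgt : E → V

namespace Multigraph

variable {V E : Type} [Fintype V] [Fintype E] [DecidableEq V] [DecidableEq E]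

/-- A `ℤ_q`-flow: conservation at every vertex. -/
def IsFlow (G : Multigraph V E) (q : ℕ) (f : E → ZMod q) : Prop :=
  ∀ v : V, ∑ e ∈ univ.filter (fun e => G.tgt e = v), f e =
           ∑ e ∈ univ.filter (fun e => G.src e = v), f e

/-- A `ℤ`-flow: conservation at every vertex. -/
def IsZFlow (G : Multigraph V E) (f : E → ℤ) : Prop :=
  ∀ v : V, ∑ e ∈ univ.filter (fun e => G.tgt e = v), f e =
           ∑ e ∈ univ.filter (fun e => G.src e = v), f e

/-- The support of a flow: the set of edges with nonzero value. -/
def flowSupport {q : ℕ} (f : E → ZMod q) : Finset E :=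
  univ.filter (fun e => f e ≠ 0)

/-- Flow partition function (complex variable). -/
def Zflow (G : Multigraph V E) (q : ℕ) [NeZero q] (x : ℂ) : ℂ :=
  ∑ f ∈ univ.filter (fun f : E → ZMod q => G.IsFlow q f), x ^ (flowSupport f).card

/-- Flow partition function (real variable). -/
def ZflowR (G : Multigraph V E) (q : ℕ) [NeZero q] (x : ℝ) : ℝ :=
  ∑ f ∈ univ.filter (fun f : E → ZMod q => G.IsFlow q f), x ^ (flowSupport f).card

/-- Potts partition function: sum over colourings of `w ^ (number of monochromatic edges)`. -/
def ZPotts (G : Multigraph V E) (q : ℕ) (w : ℂ) : ℂ :=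
  ∑ σ : V → Fin q, w ^ (univ.filter (fun e => σ (G.src e) = σ (G.tgt e))).card

/-- The simple graph on `V` induced by the edges in `F` (loops/multiplicities dropped;
this does not change connected components). -/
def compRel (G : Multigraph V E) (F : Finset E) : SimpleGraph V :=
  SimpleGraph.fromRel (fun v w => ∃ e ∈ F, G.src e = v ∧ G.tgt e = w)

/-- Number of connected components of the spanning subgraph `(V, F)`. -/
def compCount (G : Multigraph V E) (F : Finset E) : ℕ :=
  Nat.card (G.compRel F).ConnectedComponent

/-- Random cluster partition function. -/
def ZRC (G : Multigraph V E) (q : ℕ) (y : ℂ) : ℂ :=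
  ∑ F : Finset E, (q : ℂ) ^ (G.compCount F) * y ^ F.card

/-- The spanning subgraph `(V, A)`. -/
def edgeSubgraph (G : Multigraph V E) (A : Finset E) : Multigraph V {e : E // e ∈ A} :=
  ⟨fun e => G.src e.1, fun e => G.tgt e.1⟩

/-- Deletion of the edge `e`. -/
def deleteEdge (G : Multigraph V E) (e : E) : Multigraph V {e' : E // e' ≠ e} :=
  ⟨fun e' => G.src e'.1, fun e' => G.tgt e'.1⟩

/-- Contraction of the edge `e`: the edge `e` is removed and every endpoint equal to
`G.tgt e` is redirected to `G.src e`, merging the two endpoints of `e`. -/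
def contractEdge (G : Multigraph V E) (e : E) : Multigraph V {e' : E // e' ≠ e} :=
  ⟨fun e' => if G.src e'.1 = G.tgt e then G.src e else G.src e'.1,
   fun e' => if G.tgt e'.1 = G.tgt e then G.src e else G.tgt e'.1⟩

end Multigraph

/-- The `(L+1) × (L+1)` grid graph, with horizontal and vertical edges oriented
in the positive direction. -/
def gridGraph (L : ℕ) :
    Multigraph (Fin (L+1) × Fin (L+1)) ((Fin L × Fin (L+1)) ⊕ (Fin (L+1) × Fin L)) :=
  ⟨Sum.elim (fun p => (p.1.castSucc, p.2)) (fun p => (p.1, p.2.castSucc)),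
   Sum.elim (fun p => (p.1.succ, p.2)) (fun p => (p.1, p.2.succ))⟩

lemma fz_nonneg {z : ℝ} (h0 : 0 < z) (h1 : z ≤ 1) (k : ℕ) : 0 ≤ (z⁻¹)^k - z^k := by
  have ha : z^k ≤ 1 := pow_le_one₀ h0.le h1
  have hb : (1:ℝ) ≤ (z⁻¹)^k := one_le_pow₀ ((one_le_inv₀ h0).mpr h1)
  linarith

lemma fz_mono {z : ℝ} (h0 : 0 < z) (h1 : z ≤ 1) {m n : ℕ} (hmn : m ≤ n) :
    (z⁻¹)^m - z^m ≤ (z⁻¹)^n - z^n := by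
  have ha : z^n ≤ z^m := pow_le_pow_of_le_one h0.le h1 hmn
  have hb : (z⁻¹)^m ≤ (z⁻¹)^n := pow_le_pow_right₀ ((one_le_inv₀ h0).mpr h1) hmn
  linarith

lemma chord_succ {z : ℝ} (h0 : 0 < z) (h1 : z ≤ 1) :
    ∀ n : ℕ, ((n:ℝ)+1) * ((z⁻¹)^n - z^n) ≤ (n:ℝ) * ((z⁻¹)^(n+1) - z^(n+1)) := by
  intro n
  induction n with
  | zero => simp
  | succ n IH =>
    have hz : z ≠ 0 := h0.ne'
    have hrec : (z⁻¹)^(n+2) - z^(n+2) =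
        (z⁻¹ + z) * ((z⁻¹)^(n+1) - z^(n+1)) - ((z⁻¹)^n - z^n) := by
      have hu : z⁻¹ * z = 1 := inv_mul_cancel₀ hz
      linear_combination (z^n - (z⁻¹)^n) * hu
    have hwz : 2 ≤ z⁻¹ + z := by
      have h3 : (z⁻¹ + z) * z = 1 + z * z := by field_simp
      nlinarith [sq_nonneg (1 - z)]
    have hf1 : 0 ≤ (z⁻¹)^(n+1) - z^(n+1) := fz_nonneg h0 h1 (n+1)
    have key : 0 ≤ (z⁻¹ + z - 2) * ((z⁻¹)^(n+1) - z^(n+1)) * ((n:ℝ)+1) :=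
      mul_nonneg (mul_nonneg (by linarith) hf1) (by positivity)
    push_cast
    nlinarith [IH, key, hrec]

lemma chord {z : ℝ} (h0 : 0 < z) (h1 : z ≤ 1) {m n : ℕ} (hmn : m ≤ n) :
    (n:ℝ) * ((z⁻¹)^m - z^m) ≤ (m:ℝ) * ((z⁻¹)^n - z^n) := by
  induction n, hmn using Nat.le_induction with
  | base => exact le_refl _
  | succ k hk IH =>
    rcases Nat.eq_zero_or_pos k with hk0 | hkpos
    · subst hk0
      interval_cases m
      simp
    · have hc : ((k:ℝ)+1) * ((z⁻¹)^k - z^k) ≤ (k:ℝ) * ((z⁻¹)^(k+1) - z^(k+1)) :=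
        chord_succ h0 h1 k
      have hm0 : (0:ℝ) ≤ (m:ℝ) := by positivity
      have step1 : ((k:ℝ)+1) * ((k:ℝ) * ((z⁻¹)^m - z^m)) ≤
          ((k:ℝ)+1) * ((m:ℝ) * ((z⁻¹)^k - z^k)) :=
        mul_le_mul_of_nonneg_left IH (by positivity)
      have step2 : (m:ℝ) * (((k:ℝ)+1) * ((z⁻¹)^k - z^k)) ≤
          (m:ℝ) * ((k:ℝ) * ((z⁻¹)^(k+1) - z^(k+1))) :=
        mul_le_mul_of_nonneg_left hc hm0
      have step3 : (k:ℝ) * (((k:ℝ)+1) * ((z⁻¹)^m - z^m)) ≤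
          (k:ℝ) * ((m:ℝ) * ((z⁻¹)^(k+1) - z^(k+1))) := by nlinarith [step1, step2]
      have hkR : (0:ℝ) < (k:ℝ) := by exact_mod_cast hkpos
      have h4 := le_of_mul_le_mul_left step3 hkR
      push_cast
      linarith

set_option maxHeartbeats 1600000 in
theorem sum_of_minima (q : ℕ) (hq : 1 ≤ q) (x : ℝ) (hx0 : 0 < x) (hx1 : x < 1)
    (ι : ℕ) (a b : Fin q → ℤ)
    (hsum : ∑ i, a i = ∑ i, b i)
    (habs : ∑ i, |a i - b i| ≤ 2 * (ι : ℤ)) :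
    1 - (1 - x ^ ι) / (1 + x ^ ι) ≤
      ∑ i, min (x ^ (-(a i)) / ∑ j, x ^ (-(a j)))
               (x ^ (-(b i)) / ∑ j, x ^ (-(b j))) := by
  classical
  have hqne : (Finset.univ : Finset (Fin q)).Nonempty := by
    have : Nonempty (Fin q) := ⟨⟨0, hq⟩⟩
    exact univ_nonempty
  have hxne : x ≠ 0 := hx0.ne'
  set A : ℝ := ∑ j, x ^ (-(a j)) with hA
  set B : ℝ := ∑ j, x ^ (-(b j)) with hB
  have hApos : 0 < A := Finset.sum_pos (fun i _ => zpow_pos hx0 _) hqne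
  have hBpos : 0 < B := Finset.sum_pos (fun i _ => zpow_pos hx0 _) hqne
  set m : ℝ := ∑ i, min (x ^ (-(a i)) / A) (x ^ (-(b i)) / B) with hm
  have hsumA : (∑ i, x ^ (-(a i)) / A) = 1 := by
    rw [← Finset.sum_div, ← hA, div_self hApos.ne']
  have hsumB : (∑ i, x ^ (-(b i)) / B) = 1 := by
    rw [← Finset.sum_div, ← hB, div_self hBpos.ne']
  have hm1 : m ≤ 1 := by
    rw [hm, ← hsumA]
    exact Finset.sum_le_sum (fun i _ => min_le_left _ _)
  have hm0 : 0 ≤ m := Finset.sum_nonneg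
    (fun i _ => le_min (by positivity) (by positivity))
  rcases Nat.eq_zero_or_pos ι with hι0 | hιpos
  · subst hι0
    have hab : ∀ i, a i = b i := by
      have hz : ∑ i, |a i - b i| = 0 := le_antisymm (by simpa using habs)
        (Finset.sum_nonneg fun i _ => abs_nonneg _)
      intro i
      have h1 := (Finset.sum_eq_zero_iff_of_nonneg
        (fun i _ => abs_nonneg (a i - b i))).mp hz i (mem_univ i)
      have h2 := abs_eq_zero.mp h1
      linarith [h2]
    have hBA : B = A := by
      rw [hA, hB]
      exact Finset.sum_congr rfl fun i _ => by rw [hab i]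
    have hmone : m = 1 := by
      rw [hm, ← hsumA]
      exact Finset.sum_congr rfl fun i _ => by rw [hab i, hBA, min_self]
    rw [hmone]; norm_num
  -- main case ι ≥ 1
  · set z : ℝ := Real.sqrt (Real.sqrt x) with hzdef
    have hsx0 : 0 < Real.sqrt x := Real.sqrt_pos.mpr hx0
    have hz0 : 0 < z := Real.sqrt_pos.mpr hsx0
    have hzne : z ≠ 0 := hz0.ne'
    have hzz : z * z = Real.sqrt x := Real.mul_self_sqrt (Real.sqrt_nonneg x)
    have hxz : x = z * z * (z * z) := by rw [hzz, Real.mul_self_sqrt hx0.le]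
    have hsx1 : Real.sqrt x < 1 := by
      have := Real.sqrt_lt_sqrt hx0.le hx1
      simpa using this
    have hz1 : z < 1 := by
      have := Real.sqrt_lt_sqrt (Real.sqrt_nonneg x) hsx1
      simpa using this
    have hx4 : ∀ k : ℤ, x ^ k = (z ^ k)^4 := by
      intro k
      rw [hxz, mul_zpow, mul_zpow]; ring
    have hι4 : x ^ ι = (z ^ ι)^4 := by rw [hxz, mul_pow, mul_pow]; ring
    set t : ℝ := x ^ ι with ht
    have ht0 : 0 < t := pow_pos hx0 ι
    have ht1 : t ≤ 1 := pow_le_one₀ hx0.le hx1.le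
    -- the weights
    set W : Fin q → ℝ := fun i => (z ^ (-(a i)) * z ^ (-(b i)))^2 with hW
    have hWpos : ∀ i, 0 < W i := fun i => by
      have := zpow_pos hz0 (-(a i)); have := zpow_pos hz0 (-(b i)); positivity
    set S : ℝ := ∑ i, W i with hS
    have hSpos : 0 < S := Finset.sum_pos (fun i _ => hWpos i) hqne
    have hWsq : ∀ i, (W i)^2 = x ^ (-(a i)) * x ^ (-(b i)) := by
      intro i
      rw [hx4 (-(a i)), hx4 (-(b i))]
      simp only [hW]; ring
    -- Cauchy-Schwarz step : S^2 ≤ (A*B) * (m * (2 - m))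
    have hmaxsum : ∑ i, max (x ^ (-(a i)) / A) (x ^ (-(b i)) / B) = 2 - m := by
      have e : ∀ i : Fin q, max (x ^ (-(a i)) / A) (x ^ (-(b i)) / B)
          = (x ^ (-(a i)) / A) + (x ^ (-(b i)) / B)
            - min (x ^ (-(a i)) / A) (x ^ (-(b i)) / B) := by
        intro i
        rw [← min_add_max]; ring
      rw [Finset.sum_congr rfl fun i _ => e i, Finset.sum_sub_distrib,
        Finset.sum_add_distrib, hsumA, hsumB, ← hm]
      ring
    have hCS : S^2 ≤ (A*B) * (m * (2 - m)) := by
      set α : Fin q → ℝ := fun i =>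
        Real.sqrt ((A*B) * min (x ^ (-(a i)) / A) (x ^ (-(b i)) / B)) with hαdef
      set β : Fin q → ℝ := fun i =>
        Real.sqrt (max (x ^ (-(a i)) / A) (x ^ (-(b i)) / B)) with hβdef
      have hminnn : ∀ i, 0 ≤ min (x ^ (-(a i)) / A) (x ^ (-(b i)) / B) :=
        fun i => le_min (div_nonneg (zpow_pos hx0 _).le hApos.le)
          (div_nonneg (zpow_pos hx0 _).le hBpos.le)
      have hmaxnn : ∀ i, 0 ≤ max (x ^ (-(a i)) / A) (x ^ (-(b i)) / B) :=
        fun i => le_trans (hminnn i) (min_le_max)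
      have hαβ : ∀ i, α i * β i = W i := by
        intro i
        rw [hαdef, hβdef]
        simp only []
        rw [← Real.sqrt_mul (mul_nonneg (mul_pos hApos hBpos).le (hminnn i))]
        have e2 : (A*B) * min (x ^ (-(a i)) / A) (x ^ (-(b i)) / B)
            * max (x ^ (-(a i)) / A) (x ^ (-(b i)) / B) = (W i)^2 := by
          rw [mul_assoc, min_mul_max, hWsq i]
          field_simp
        rw [e2, Real.sqrt_sq (hWpos i).le]
      have hcs2 := Finset.sum_mul_sq_le_sq_mul_sq univ α β
      have hα2 : ∑ i, (α i)^2 = (A*B) * m := by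
        rw [hm, Finset.mul_sum]
        refine Finset.sum_congr rfl fun i _ => ?_
        rw [hαdef]
        exact Real.sq_sqrt (mul_nonneg (mul_pos hApos hBpos).le (hminnn i))
      have hβ2 : ∑ i, (β i)^2 = 2 - m := by
        rw [← hmaxsum]
        refine Finset.sum_congr rfl fun i _ => ?_
        rw [hβdef]
        exact Real.sq_sqrt (hmaxnn i)
      calc S^2 = (∑ i, α i * β i)^2 := by
            rw [Finset.sum_congr rfl fun i _ => hαβ i]
        _ ≤ (∑ i, (α i)^2) * (∑ i, (β i)^2) := hcs2
        _ = (A*B) * (m * (2 - m)) := by rw [hα2, hβ2]; ring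
    -- the key inequality  4 t (A*B) ≤ (1+t)^2 S^2
    set n : ℕ := 2*ι with hn
    have hnpos : 0 < n := by omega
    have hnR : (0:ℝ) < (n:ℝ) := by exact_mod_cast hnpos
    set c : Fin q → ℤ := fun i => a i - b i with hc
    set N : Fin q → ℕ := fun i => (c i).natAbs with hN
    set fn : ℝ := (z⁻¹)^n - z^n with hfn
    set F : Fin q → Fin q → ℝ := fun i j => z ^ (c j - c i) - z ^ (c i - c j) with hF
    have hNsumZ : (∑ i, (N i : ℤ)) ≤ (n : ℤ) := by
      calc (∑ i, (N i : ℤ)) = ∑ i, |a i - b i| := by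
            refine Finset.sum_congr rfl fun i _ => ?_
            rw [hN, hc]
            exact (Int.abs_eq_natAbs _).symm
        _ ≤ 2 * (ι:ℤ) := habs
        _ = (n : ℤ) := by rw [hn]; push_cast; ring
    have hpairN : ∀ i j, i ≠ j → N i + N j ≤ n := by
      intro i j hij
      have h1 : (∑ k ∈ ({i,j} : Finset (Fin q)), (N k : ℤ)) ≤ ∑ k, (N k : ℤ) :=
        Finset.sum_le_sum_of_subset_of_nonneg (subset_univ _)
          (fun k _ _ => Int.natCast_nonneg _)
      rw [Finset.sum_pair hij] at h1
      have h2 : (N i : ℤ) + (N j : ℤ) ≤ (n:ℤ) := le_trans h1 hNsumZ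
      exact_mod_cast h2
    -- pointwise identity
    have idpair : ∀ i j, x ^ (-(a i)) * x ^ (-(b j)) + x ^ (-(a j)) * x ^ (-(b i))
        = 2 * (W i * W j) + W i * W j * (F i j)^2 := by
      intro i j
      have hzc : z ^ (c j - c i)
          = z ^ (-(a i)) * z ^ (-(b j)) / (z ^ (-(a j)) * z ^ (-(b i))) := by
        have e : c j - c i = ((-(a i)) + (-(b j))) - ((-(a j)) + (-(b i))) := by
          rw [hc]; ring
        rw [e, zpow_sub₀ hzne, zpow_add₀ hzne, zpow_add₀ hzne]
      have hzc' : z ^ (c i - c j)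
          = z ^ (-(a j)) * z ^ (-(b i)) / (z ^ (-(a i)) * z ^ (-(b j))) := by
        have e : c i - c j = ((-(a j)) + (-(b i))) - ((-(a i)) + (-(b j))) := by
          rw [hc]; ring
        rw [e, zpow_sub₀ hzne, zpow_add₀ hzne, zpow_add₀ hzne]
      have hP1 : z ^ (-(a i)) ≠ 0 := (zpow_pos hz0 _).ne'
      have hP2 : z ^ (-(a j)) ≠ 0 := (zpow_pos hz0 _).ne'
      have hQ1 : z ^ (-(b i)) ≠ 0 := (zpow_pos hz0 _).ne'
      have hQ2 : z ^ (-(b j)) ≠ 0 := (zpow_pos hz0 _).ne'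
      rw [hx4 (-(a i)), hx4 (-(b j)), hx4 (-(a j)), hx4 (-(b i))]
      simp only [hF, hW]
      rw [hzc, hzc']
      field_simp
      ring
    -- expansion of 2 A B
    have hABexp : 2 * (A * B) = 2 * S^2 + ∑ i, ∑ j, W i * W j * (F i j)^2 := by
      have e1 : A * B = ∑ i, ∑ j, x ^ (-(a i)) * x ^ (-(b j)) := by
        rw [hA, hB]; exact Finset.sum_mul_sum _ _ _ _
      have e2 : A * B = ∑ i, ∑ j, x ^ (-(a j)) * x ^ (-(b i)) := by
        rw [mul_comm, hA, hB, Finset.sum_mul_sum]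
        exact Finset.sum_congr rfl fun i _ => Finset.sum_congr rfl fun j _ => mul_comm _ _
      have e3 : S^2 = ∑ i, ∑ j, W i * W j := by
        rw [sq, hS]; exact Finset.sum_mul_sum _ _ _ _
      calc 2 * (A*B)
          = (∑ i, ∑ j, x ^ (-(a i)) * x ^ (-(b j)))
            + ∑ i, ∑ j, x ^ (-(a j)) * x ^ (-(b i)) := by
            rw [← e1, ← e2]; ring
        _ = ∑ i, ∑ j, (x ^ (-(a i)) * x ^ (-(b j)) + x ^ (-(a j)) * x ^ (-(b i))) := by
            rw [← Finset.sum_add_distrib]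
            exact Finset.sum_congr rfl fun i _ => (Finset.sum_add_distrib).symm
        _ = ∑ i, ∑ j, (2 * (W i * W j) + W i * W j * (F i j)^2) :=
            Finset.sum_congr rfl fun i _ => Finset.sum_congr rfl fun j _ => idpair i j
        _ = 2 * S^2 + ∑ i, ∑ j, W i * W j * (F i j)^2 := by
            rw [e3, Finset.mul_sum, ← Finset.sum_add_distrib]
            exact Finset.sum_congr rfl fun i _ => by
              rw [Finset.mul_sum, ← Finset.sum_add_distrib]
    -- per-pair bound
    have hpp : ∀ i j, i ≠ j → W i * W j * (F i j)^2
        ≤ (fn^2 / n) * (W i * W j * ((N i : ℝ) + (N j : ℝ))) := by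
      intro i j hij
      set k : ℤ := c i - c j with hk
      have hFd : F i j = z ^ (-k) - z ^ k := by
        simp only [hF, hk]
        congr 2
        ring
      have hFsq : (F i j)^2 = ((z⁻¹)^(k.natAbs) - z^(k.natAbs))^2 := by
        rcases le_or_gt 0 k with hk0 | hk0
        · have hk' : (k.natAbs : ℤ) = k := Int.natAbs_of_nonneg hk0
          have e1 : z ^ (-k) = (z⁻¹) ^ (k.natAbs) := by
            rw [inv_pow, ← zpow_natCast z k.natAbs, hk', zpow_neg]
          have e2 : z ^ k = z ^ (k.natAbs) := by
            rw [← zpow_natCast z k.natAbs, hk']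
          rw [hFd, e1, e2]
        · have hk' : (k.natAbs : ℤ) = -k := by
            rw [← Int.natAbs_neg]
            exact Int.natAbs_of_nonneg (by omega)
          have e : z ^ (-k) - z ^ k = -((z⁻¹)^(k.natAbs) - z^(k.natAbs)) := by
            have e1 : z ^ (-k) = z ^ (k.natAbs) := by
              rw [← zpow_natCast z k.natAbs, hk']
            have e2 : z ^ k = (z⁻¹) ^ (k.natAbs) := by
              rw [inv_pow, ← zpow_natCast z k.natAbs, hk', zpow_neg, inv_inv]
            rw [e1, e2]; ring
          rw [hFd, e, neg_sq]
      have hdN : k.natAbs ≤ N i + N j := by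
        simp only [hN, hk]
        exact Int.natAbs_sub_le (c i) (c j)
      have hNn : N i + N j ≤ n := hpairN i j hij
      have h1 : 0 ≤ (z⁻¹)^(k.natAbs) - z^(k.natAbs) := fz_nonneg hz0 hz1.le _
      have h2 : (z⁻¹)^(k.natAbs) - z^(k.natAbs)
          ≤ (z⁻¹)^(N i + N j) - z^(N i + N j) := fz_mono hz0 hz1.le hdN
      have h3 : (n:ℝ) * ((z⁻¹)^(N i + N j) - z^(N i + N j))
          ≤ ((N i + N j : ℕ):ℝ) * fn := by
        rw [hfn]; exact chord hz0 hz1.le hNn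
      have h4 : (z⁻¹)^(N i + N j) - z^(N i + N j) ≤ (((N i + N j : ℕ):ℝ)/n) * fn := by
        rw [div_mul_eq_mul_div, le_div_iff₀ hnR]
        calc ((z⁻¹)^(N i + N j) - z^(N i + N j)) * n
            = (n:ℝ) * ((z⁻¹)^(N i + N j) - z^(N i + N j)) := by ring
          _ ≤ ((N i + N j : ℕ):ℝ) * fn := h3
      have h5 : (F i j)^2 ≤ ((((N i + N j : ℕ):ℝ)/n) * fn)^2 := by
        rw [hFsq]
        exact pow_le_pow_left₀ h1 (le_trans h2 h4) 2
      have hratio : (((N i + N j : ℕ):ℝ)/n) ≤ 1 := by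
        rw [div_le_one hnR]
        exact_mod_cast hNn
      have hrat0 : 0 ≤ (((N i + N j : ℕ):ℝ)/n) := by positivity
      have h6 : ((((N i + N j : ℕ):ℝ)/n) * fn)^2
          ≤ (((N i + N j : ℕ):ℝ)/n) * fn^2 := by
        have : ((((N i + N j : ℕ):ℝ)/n))^2 ≤ (((N i + N j : ℕ):ℝ)/n) := by
          nlinarith [hratio, hrat0]
        calc ((((N i + N j : ℕ):ℝ)/n) * fn)^2
            = ((((N i + N j : ℕ):ℝ)/n))^2 * fn^2 := by ring
          _ ≤ (((N i + N j : ℕ):ℝ)/n) * fn^2 :=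
            mul_le_mul_of_nonneg_right this (sq_nonneg _)
      have hWW : 0 ≤ W i * W j := le_of_lt (mul_pos (hWpos i) (hWpos j))
      calc W i * W j * (F i j)^2
          ≤ W i * W j * ((((N i + N j : ℕ):ℝ)/n) * fn^2) :=
            mul_le_mul_of_nonneg_left (le_trans h5 h6) hWW
        _ = (fn^2 / n) * (W i * W j * ((N i : ℝ) + (N j : ℝ))) := by
            push_cast
            ring
    -- diagonal vanishes
    have hFdiag : ∀ i, F i i = 0 := by
      intro i
      simp only [hF, sub_self, zpow_zero]
    -- bounding the double sum
    have hDsum : ∑ i, ∑ j, W i * W j * (F i j)^2 ≤ fn^2 * S^2 / 2 := by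
      have step1 : ∀ i, (∑ j, W i * W j * (F i j)^2)
          = ∑ j ∈ univ.erase i, W i * W j * (F i j)^2 := by
        intro i
        rw [← Finset.sum_erase_add univ _ (mem_univ i), hFdiag i]
        simp
      set T : ℝ := ∑ j, (N j : ℝ) * W j with hT
      have inner_eq : ∀ i, (∑ j ∈ univ.erase i, W i * W j * ((N i:ℝ) + (N j:ℝ)))
          = (N i:ℝ) * (W i * (S - W i)) + W i * (T - (N i:ℝ) * W i) := by
        intro i
        have e : ∀ j, W i * W j * ((N i:ℝ) + (N j:ℝ))
            = (N i:ℝ) * W i * W j + W i * ((N j:ℝ) * W j) := fun j => by ring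
        rw [Finset.sum_congr rfl fun j _ => e j, Finset.sum_add_distrib,
          ← Finset.mul_sum, ← Finset.mul_sum,
          Finset.sum_erase_eq_sub (mem_univ i), Finset.sum_erase_eq_sub (mem_univ i),
          ← hS, ← hT]
        ring
      have hWT : ∑ i, W i * T = ∑ i, (N i:ℝ) * W i * S := by
        rw [← Finset.sum_mul, ← Finset.sum_mul, ← hS, ← hT]; ring
      have sum_eq : ∑ i, ((N i:ℝ) * (W i * (S - W i)) + W i * (T - (N i:ℝ) * W i))
          = 2 * ∑ i, (N i:ℝ) * (W i * (S - W i)) := by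
        calc ∑ i, ((N i:ℝ) * (W i * (S - W i)) + W i * (T - (N i:ℝ) * W i))
            = ∑ i, (2 * ((N i:ℝ) * (W i * (S - W i))) + (W i * T - (N i:ℝ) * W i * S)) :=
              Finset.sum_congr rfl fun i _ => by ring
          _ = 2 * (∑ i, (N i:ℝ) * (W i * (S - W i)))
              + ((∑ i, W i * T) - ∑ i, (N i:ℝ) * W i * S) := by
              rw [Finset.sum_add_distrib, Finset.sum_sub_distrib, ← Finset.mul_sum]
          _ = 2 * ∑ i, (N i:ℝ) * (W i * (S - W i)) := by rw [hWT]; ring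
      have bound_i : ∀ i, (N i:ℝ) * (W i * (S - W i)) ≤ (N i:ℝ) * (S^2/4) := by
        intro i
        refine mul_le_mul_of_nonneg_left ?_ (Nat.cast_nonneg _)
        nlinarith [sq_nonneg (S - 2 * W i)]
      have hNsumR : (∑ i, (N i : ℝ)) ≤ (n : ℝ) := by exact_mod_cast hNsumZ
      have hfinal : ∑ i, (N i:ℝ) * (W i * (S - W i)) ≤ (n:ℝ) * (S^2/4) := by
        calc ∑ i, (N i:ℝ) * (W i * (S - W i)) ≤ ∑ i, (N i:ℝ) * (S^2/4) :=
              Finset.sum_le_sum fun i _ => bound_i i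
          _ = (∑ i, (N i:ℝ)) * (S^2/4) := by rw [← Finset.sum_mul]
          _ ≤ (n:ℝ) * (S^2/4) :=
              mul_le_mul_of_nonneg_right hNsumR (div_nonneg (sq_nonneg S) (by norm_num))
      calc ∑ i, ∑ j, W i * W j * (F i j)^2
          = ∑ i, ∑ j ∈ univ.erase i, W i * W j * (F i j)^2 :=
            Finset.sum_congr rfl fun i _ => step1 i
        _ ≤ ∑ i, ∑ j ∈ univ.erase i, (fn^2 / n) * (W i * W j * ((N i:ℝ) + (N j:ℝ))) :=
            Finset.sum_le_sum fun i _ => Finset.sum_le_sum fun j hj =>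
              hpp i j (Ne.symm (Finset.ne_of_mem_erase hj))
        _ = (fn^2 / n) * ∑ i, ∑ j ∈ univ.erase i, (W i * W j * ((N i:ℝ) + (N j:ℝ))) := by
            rw [Finset.mul_sum]
            exact Finset.sum_congr rfl fun i _ => by rw [Finset.mul_sum]
        _ = (fn^2 / n) * (2 * ∑ i, (N i:ℝ) * (W i * (S - W i))) := by
            rw [Finset.sum_congr rfl fun i _ => inner_eq i, sum_eq]
        _ ≤ (fn^2 / n) * (2 * ((n:ℝ) * (S^2/4))) := by
            refine mul_le_mul_of_nonneg_left ?_ (by positivity)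
            linarith [hfinal]
        _ = fn^2 * S^2 / 2 := by
            field_simp
            ring
    -- (1-t)^2 = t * fn^2
    have hfnt : (1 - t)^2 = t * fn^2 := by
      have hζ0 : z ^ ι ≠ 0 := (pow_pos hz0 ι).ne'
      have hfneq : fn = ((z^ι)^2)⁻¹ - (z^ι)^2 := by
        rw [hfn, hn, show 2*ι = ι*2 from mul_comm 2 ι, pow_mul, pow_mul]
        rw [inv_pow, inv_pow]
      rw [hι4, hfneq]
      field_simp
    -- key inequality
    have hK : 4 * t * (A*B) ≤ (1+t)^2 * S^2 := by
      have h2 : t * (∑ i, ∑ j, W i * W j * (F i j)^2) ≤ t * (fn^2 * S^2 / 2) :=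
        mul_le_mul_of_nonneg_left hDsum ht0.le
      have h1t : t * (2 * (A * B)) = t * (2 * S^2 + ∑ i, ∑ j, W i * W j * (F i j)^2) := by
        rw [hABexp]
      have h3 : 4*t*(A*B) = 4*t*S^2 + 2*(t * ∑ i, ∑ j, W i * W j * (F i j)^2) := by
        linear_combination 2*h1t
      have h5 : t*fn^2*S^2 = (1-t)^2*S^2 := by linear_combination (-(S^2)) * hfnt
      have h6 : 2*(t * ∑ i, ∑ j, W i * W j * (F i j)^2) ≤ (1-t)^2*S^2 := by
        calc 2*(t * ∑ i, ∑ j, W i * W j * (F i j)^2)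
            ≤ 2*(t * (fn^2 * S^2 / 2)) :=
              mul_le_mul_of_nonneg_left h2 (by norm_num)
          _ = t*fn^2*S^2 := by ring
          _ = (1-t)^2*S^2 := h5
      calc 4*t*(A*B) = 4*t*S^2 + 2*(t * ∑ i, ∑ j, W i * W j * (F i j)^2) := h3
        _ ≤ 4*t*S^2 + (1-t)^2*S^2 := by linarith [h6]
        _ = (1+t)^2*S^2 := by ring
    -- conclude
    have hkey : 4 * t ≤ (1+t)^2 * (m * (2 - m)) := by
      have hchain : 4 * t * (A*B) ≤ (1+t)^2 * ((A*B) * (m * (2-m))) :=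
        le_trans hK (mul_le_mul_of_nonneg_left hCS (by positivity))
      have hABpos : 0 < A * B := mul_pos hApos hBpos
      have h5 : (4 * t) * (A*B) ≤ ((1+t)^2 * (m * (2-m))) * (A*B) := by
        linear_combination hchain
      exact le_of_mul_le_mul_right h5 hABpos
    have h1t : (0:ℝ) < 1 + t := by positivity
    have hgoal : 1 - (1 - t)/(1 + t) = 2*t/(1+t) := by
      field_simp
      ring
    rw [hgoal, div_le_iff₀ h1t]
    nlinarith [hkey, hm1, hm0, ht1, ht0]
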